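/- Let B be the adjacency matrix of a connected undirected graph on N vertices, and let x, y : ℝ → ℝ^N be differentiable at a point τ₂ > 0, with 0 < x_i(τ), 0 < y_i(τ) and x_i(τ) + y_i(τ) < 1 for all i, for τ in a neighborhood of τ₂, and suppose that for every such τ the coexistence fixed point equation Σ_j B_{ij} y_j(τ) = y_i(τ)/(τ(1 − x_i(τ) − y_i(τ))) holds for all i. If y_j'(τ₂) > 0 for all j, then differentiating the logarithm of the fixed point equation yields, for every i, the strict inequality y_i'(τ₂)/y_i(τ₂) + (x_i'(τ₂) + y_i'(τ₂))/(1 − x_i(τ₂) − y_i(τ₂)) − 1/τ₂ > 0. -/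

import Mathlib

open Matrix Finset

/-- Spectral radius of a real matrix: supremum of absolute values of its complex eigenvalues. -/
noncomputable def specRad {N : ℕ} (M : Matrix (Fin N) (Fin N) ℝ) : ℝ :=
  sSup ((fun z => ‖z‖) '' spectrum ℂ (M.map Complex.ofReal))

/-- `A` is the adjacency matrix of a connected undirected graph:
symmetric, 0/1 entries, zero diagonal, and irreducible (connectivity). -/
def IsConnectedAdjMatrix {N : ℕ} (A : Matrix (Fin N) (Fin N) ℝ) : Prop :=
  A.IsSymm ∧ (∀ i j, A i j = 0 ∨ A i j = 1) ∧ (∀ i, A i i = 0) ∧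
    (∀ i j, i ≠ j → ∃ k : ℕ, 0 < (A ^ k) i j)

/-- `x` satisfies the single-virus SIS fixed point equations for `(A, τ)`. -/
def IsSISFixedPoint {N : ℕ} (A : Matrix (Fin N) (Fin N) ℝ) (τ : ℝ)
    (x : Fin N → ℝ) : Prop :=
  (∀ i, 0 < x i ∧ x i < 1) ∧ (∀ i, ∑ j, A i j * x j = x i / (τ * (1 - x i)))

/-- Let `B` be the adjacency matrix of a connected undirected graph on `N`
vertices, and let `x, y : ℝ → ℝ^N` be differentiable at a point `τ₂ > 0`, with `0 < x_i(τ)`,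
`0 < y_i(τ)` and `x_i(τ) + y_i(τ) < 1` for all `i`, for `τ` in a neighborhood of `τ₂`, and
suppose that for every such `τ` the coexistence fixed point equation
`Σ_j B_{ij} y_j(τ) = y_i(τ)/(τ(1 − x_i(τ) − y_i(τ)))` holds for all `i`. If `y_j'(τ₂) > 0`
for all `j`, then differentiating the logarithm of the fixed point equation yields, for every
`i`, the strict inequality
`y_i'(τ₂)/y_i(τ₂) + (x_i'(τ₂) + y_i'(τ₂))/(1 − x_i(τ₂) − y_i(τ₂)) − 1/τ₂ > 0`. -/
theorem log_derivative_inequality {N : ℕ}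
    (B : Matrix (Fin N) (Fin N) ℝ) (hB : IsConnectedAdjMatrix B)
    (τ₂ : ℝ) (hτ₂ : 0 < τ₂)
    (x y : ℝ → Fin N → ℝ)
    (hdx : ∀ i, DifferentiableAt ℝ (fun τ => x τ i) τ₂)
    (hdy : ∀ i, DifferentiableAt ℝ (fun τ => y τ i) τ₂)
    (hnbhd : ∀ᶠ τ in nhds τ₂,
      (∀ i, 0 < x τ i ∧ 0 < y τ i ∧ x τ i + y τ i < 1) ∧
      (∀ i, ∑ j, B i j * y τ j = y τ i / (τ * (1 - x τ i - y τ i))))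
    (hy' : ∀ j, 0 < deriv (fun τ => y τ j) τ₂) :
    ∀ i, 0 < deriv (fun τ => y τ i) τ₂ / y τ₂ i +
        (deriv (fun τ => x τ i) τ₂ + deriv (fun τ => y τ i) τ₂) /
          (1 - x τ₂ i - y τ₂ i) - 1 / τ₂ := by
  intro i
  have h0 := hnbhd.self_of_nhds
  obtain ⟨hx0, hy0, hlt⟩ := h0.1 i
  have hsum := h0.2 i
  have hD : 0 < 1 - x τ₂ i - y τ₂ i := by linarith
  set a' := deriv (fun τ => x τ i) τ₂ with ha'
  set b' := deriv (fun τ => y τ i) τ₂ with hb'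
  set b := y τ₂ i with hb
  set D := 1 - x τ₂ i - y τ₂ i with hDdef
  -- eventual equality of F and G
  have hFG : (fun τ => ∑ j, B i j * y τ j) =ᶠ[nhds τ₂]
      (fun τ => y τ i / (τ * (1 - x τ i - y τ i))) :=
    hnbhd.mono fun τ h => h.2 i
  -- derivative of F
  have hF : HasDerivAt (fun τ => ∑ j, B i j * y τ j)
      (∑ j, B i j * deriv (fun τ => y τ j) τ₂) τ₂ := by
    apply HasDerivAt.fun_sum
    intro j _
    exact ((hdy j).hasDerivAt).const_mul (B i j)
  -- derivative of G
  have hden : HasDerivAt (fun τ => τ * (1 - x τ i - y τ i))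
      (1 * D + τ₂ * (0 - a' - b')) τ₂ := by
    exact (hasDerivAt_id τ₂).mul
      (((hasDerivAt_const τ₂ (1 : ℝ)).sub (hdx i).hasDerivAt).sub (hdy i).hasDerivAt)
  have hdenne : τ₂ * D ≠ 0 := by positivity
  have hG : HasDerivAt (fun τ => y τ i / (τ * (1 - x τ i - y τ i)))
      ((b' * (τ₂ * D) - b * (1 * D + τ₂ * (0 - a' - b'))) / (τ₂ * D) ^ 2) τ₂ :=
    (hdy i).hasDerivAt.div hden hdenne
  -- equality of derivatives
  have hderiv_eq : deriv (fun τ => ∑ j, B i j * y τ j) τ₂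
      = deriv (fun τ => y τ i / (τ * (1 - x τ i - y τ i))) τ₂ := hFG.deriv_eq
  have hFd := hF.deriv
  have hGd := hG.deriv
  -- positivity of the sum of derivatives
  have hrow : ∃ j, B i j = 1 := by
    by_contra hall
    push_neg at hall
    have hz : ∀ j, B i j = 0 := fun j => (hB.2.1 i j).resolve_right (hall j)
    have : (0 : ℝ) = y τ₂ i / (τ₂ * (1 - x τ₂ i - y τ₂ i)) := by
      rw [← hsum]; simp [hz]
    have hpos : 0 < y τ₂ i / (τ₂ * (1 - x τ₂ i - y τ₂ i)) := by positivity
    linarith [this ▸ hpos]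
  obtain ⟨j₀, hj₀⟩ := hrow
  have hSpos : 0 < ∑ j, B i j * deriv (fun τ => y τ j) τ₂ := by
    apply Finset.sum_pos'
    · intro j _
      rcases hB.2.1 i j with h | h <;> simp [h] <;> nlinarith [hy' j]
    · exact ⟨j₀, Finset.mem_univ j₀, by simp [hj₀]; exact hy' j₀⟩
  have hK : 0 < (b' * (τ₂ * D) - b * (1 * D + τ₂ * (0 - a' - b'))) / (τ₂ * D) ^ 2 := by
    rw [← hGd, ← hderiv_eq, hFd]; exact hSpos
  have key : b' / b + (a' + b') / D - 1 / τ₂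
      = ((b' * (τ₂ * D) - b * (1 * D + τ₂ * (0 - a' - b'))) / (τ₂ * D) ^ 2)
        * (τ₂ * D) / b := by
    field_simp
    ring
  rw [key]
  positivity
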